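/- arXiv:nlin/0405040 — 6 statements merged into one kernel-verified Lean document; each statement's English description precedes it below -/
import Mathlib

section
/- Let B be a symmetric, ad-invariant, non-degenerate bilinear form on g and let a_0,…,a_n be complex numbers with a_n ≠ 0. Then the bilinear form ⟨X,Y⟩^(n)_A = Σ_{j=0}^n a_j Σ_{i=0}^j B(X_i, Y_{j−i}) on g^(n) is symmetric, ad-invariant (⟨[X,Y],Z⟩^(n)_A = ⟨X,[Y,Z]⟩^(n)_A for all X,Y,Z ∈ g^(n)), and non-degenerate. -/
open scoped BigOperators
open Fin.NatCast

/-- The Lie bracket of the polynomial Lie algebra `g^{(n)}` on `(n+1)`-tuples: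
`[(X_0,…,X_n),(Y_0,…,Y_n)]_k = ∑_{j=0}^k ⁅X_j, Y_{k-j}⁆`. -/
noncomputable def tupleBracket {g : Type*} [LieRing g] (n : ℕ) (X Y : Fin (n + 1) → g) :
    Fin (n + 1) → g :=
  fun k => ∑ j ∈ Finset.range ((k : ℕ) + 1),
    ⁅X (j : Fin (n + 1)), Y (((k : ℕ) - j : ℕ) : Fin (n + 1))⁆

/-- The bilinear form `⟨X,Y⟩^{(n)}_A = ∑_{j=0}^n a_j ∑_{i=0}^j B(X_i, Y_{j-i})` on `g^{(n)}`. -/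
noncomputable def tupleForm {g : Type*} [AddCommGroup g] [Module ℂ g]
    (n : ℕ) (B : g →ₗ[ℂ] g →ₗ[ℂ] ℂ) (a : ℕ → ℂ) (X Y : Fin (n + 1) → g) : ℂ :=
  ∑ j ∈ Finset.range (n + 1), a j * ∑ i ∈ Finset.range (j + 1),
    B (X (i : Fin (n + 1))) (Y ((j - i : ℕ) : Fin (n + 1)))

private lemma tri_reindex (j : ℕ) (f : ℕ → ℕ → ℕ → ℂ) :
    ∑ i ∈ Finset.range (j + 1), ∑ p ∈ Finset.range (i + 1), f p (i - p) (j - i)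
      = ∑ i ∈ Finset.range (j + 1), ∑ q ∈ Finset.range (j - i + 1), f i q (j - i - q) := by
  rw [Finset.sum_sigma', Finset.sum_sigma']
  refine Finset.sum_nbij' (i := fun x => ⟨x.2, x.1 - x.2⟩) (j := fun x => ⟨x.1 + x.2, x.1⟩)
    ?_ ?_ ?_ ?_ ?_
  · rintro ⟨i, p⟩ h
    simp only [Finset.mem_sigma, Finset.mem_range] at h ⊢
    omega
  · rintro ⟨i, q⟩ h
    simp only [Finset.mem_sigma, Finset.mem_range] at h ⊢
    omega
  · rintro ⟨i, p⟩ h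
    simp only [Finset.mem_sigma, Finset.mem_range] at h
    simp only [Sigma.mk.inj_iff, heq_eq_eq]
    exact ⟨by omega, trivial⟩
  · rintro ⟨i, q⟩ h
    simp only [Finset.mem_sigma, Finset.mem_range] at h
    simp only [Sigma.mk.inj_iff, heq_eq_eq]
    exact ⟨trivial, by omega⟩
  · rintro ⟨i, p⟩ h
    simp only [Finset.mem_sigma, Finset.mem_range] at h
    have h2 : j - p - (i - p) = j - i := by omega
    simp only [h2]

/-- If `B` is symmetric, ad-invariant and non-degenerate on `g` and `a_n ≠ 0`, then
`⟨·,·⟩^{(n)}_A` is symmetric, ad-invariant and non-degenerate on `g^{(n)}`. -/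
theorem stmt3 {g : Type*} [LieRing g] [LieAlgebra ℂ g] [FiniteDimensional ℂ g]
    (n : ℕ) (B : g →ₗ[ℂ] g →ₗ[ℂ] ℂ)
    (hBsymm : ∀ x y : g, B x y = B y x)
    (hBinv : ∀ x y z : g, B ⁅x, y⁆ z = B x ⁅y, z⁆)
    (hBnd : ∀ x : g, (∀ y : g, B x y = 0) → x = 0)
    (a : ℕ → ℂ) (han : a n ≠ 0) :
    (∀ X Y : Fin (n + 1) → g, tupleForm n B a X Y = tupleForm n B a Y X) ∧
    (∀ X Y Z : Fin (n + 1) → g,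
        tupleForm n B a (tupleBracket n X Y) Z = tupleForm n B a X (tupleBracket n Y Z)) ∧
    (∀ X : Fin (n + 1) → g, (∀ Y : Fin (n + 1) → g, tupleForm n B a X Y = 0) → X = 0) := by
  refine ⟨?_, ?_, ?_⟩
  · -- symmetry
    intro X Y
    unfold tupleForm
    refine Finset.sum_congr rfl fun j hj => ?_
    congr 1
    rw [← Finset.sum_range_reflect]
    refine Finset.sum_congr rfl fun i hi => ?_
    simp only [Finset.mem_range] at hi
    have h1 : j + 1 - 1 - i = j - i := by omega
    have h2 : j - (j - i) = i := by omega
    rw [h1, h2, hBsymm]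
  · -- ad-invariance
    intro X Y Z
    unfold tupleForm
    refine Finset.sum_congr rfl fun j hj => ?_
    simp only [Finset.mem_range] at hj
    congr 1
    have lhs_eq : ∀ i ∈ Finset.range (j + 1),
        (B (tupleBracket n X Y (i : Fin (n + 1)))) (Z ((j - i : ℕ) : Fin (n + 1)))
          = ∑ p ∈ Finset.range (i + 1),
            (B (X (p : Fin (n + 1))))
              ⁅Y ((i - p : ℕ) : Fin (n + 1)), Z ((j - i : ℕ) : Fin (n + 1))⁆ := by
      intro i hi
      simp only [Finset.mem_range] at hi
      have hv : ((i : Fin (n + 1)) : ℕ) = i := Fin.val_cast_of_lt (by omega)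
      rw [tupleBracket, hv, map_sum, LinearMap.coe_sum, Finset.sum_apply]
      exact Finset.sum_congr rfl fun p _ => hBinv _ _ _
    have rhs_eq : ∀ i ∈ Finset.range (j + 1),
        (B (X (i : Fin (n + 1)))) (tupleBracket n Y Z ((j - i : ℕ) : Fin (n + 1)))
          = ∑ q ∈ Finset.range (j - i + 1),
            (B (X (i : Fin (n + 1))))
              ⁅Y ((q : ℕ) : Fin (n + 1)), Z ((j - i - q : ℕ) : Fin (n + 1))⁆ := by
      intro i hi
      have hv : (((j - i : ℕ) : Fin (n + 1)) : ℕ) = j - i := Fin.val_cast_of_lt (by omega)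
      rw [tupleBracket, hv, map_sum]
    rw [Finset.sum_congr rfl lhs_eq, Finset.sum_congr rfl rhs_eq]
    exact tri_reindex j (fun p q r =>
      (B (X (p : Fin (n + 1)))) ⁅Y ((q : ℕ) : Fin (n + 1)), Z ((r : ℕ) : Fin (n + 1))⁆)
  · -- non-degeneracy
    intro X hX
    have key : ∀ k, k ≤ n → X ((k : ℕ) : Fin (n + 1)) = 0 := by
      intro k
      induction k using Nat.strong_induction_on with
      | _ k IH =>
        intro hk
        apply hBnd
        intro y
        set Y : Fin (n + 1) → g := fun i => if i = ((n - k : ℕ) : Fin (n + 1)) then y else 0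
          with hY
        have h0 := hX Y
        rw [tupleForm] at h0
        have hsum : ∀ j ∈ Finset.range (n + 1),
            a j * ∑ i ∈ Finset.range (j + 1),
              (B (X (i : Fin (n + 1)))) (Y ((j - i : ℕ) : Fin (n + 1)))
              = if n - k ≤ j then a j * (B (X ((j - (n - k) : ℕ) : Fin (n + 1)))) y else 0 := by
          intro j hj
          simp only [Finset.mem_range] at hj
          have inner : ∀ i ∈ Finset.range (j + 1),
              (B (X (i : Fin (n + 1)))) (Y ((j - i : ℕ) : Fin (n + 1)))
                = if j - i = n - k then (B (X (i : Fin (n + 1)))) y else 0 := by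
            intro i hi
            simp only [Finset.mem_range] at hi
            have hcond : (((j - i : ℕ) : Fin (n + 1)) = ((n - k : ℕ) : Fin (n + 1)))
                ↔ j - i = n - k := by
              constructor
              · intro h
                have := congrArg Fin.val h
                rwa [Fin.val_cast_of_lt (by omega), Fin.val_cast_of_lt (by omega)] at this
              · intro h; rw [h]
            rw [hY]
            simp only [hcond]
            split <;> simp
          rw [Finset.sum_congr rfl inner]
          by_cases hcase : n - k ≤ j
          · rw [if_pos hcase]
            congr 1
            rw [Finset.sum_eq_single_of_mem (j - (n - k))
              (by simp only [Finset.mem_range]; omega)]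
            · rw [if_pos (by omega)]
            · intro i hi hne
              simp only [Finset.mem_range] at hi
              rw [if_neg (by omega)]
          · rw [if_neg hcase]
            rw [Finset.sum_eq_zero fun i hi => ?_, mul_zero]
            simp only [Finset.mem_range] at hi
            rw [if_neg (by omega)]
        rw [Finset.sum_congr rfl hsum] at h0
        rw [Finset.sum_eq_single_of_mem n (by simp)] at h0
        · rw [if_pos (by omega)] at h0
          have hnk : n - (n - k) = k := by omega
          rw [hnk] at h0
          rcases mul_eq_zero.mp h0 with h | h
          · exact absurd h han
          · exact h
        · intro j hj hne
          simp only [Finset.mem_range] at hj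
          by_cases hcase : n - k ≤ j
          · rw [if_pos hcase]
            have hlt : j - (n - k) < k := by omega
            rw [IH _ hlt (by omega)]
            simp
          · rw [if_neg hcase]
    funext i
    have := key i.val (by omega)
    rwa [Fin.cast_val_eq_self] at this
end

section
/- For every ζ ≠ 0 the elements Y^(l)_i(ζ) (0 ≤ l ≤ n, 1 ≤ i ≤ r) form a basis of g^n = ⊕_{l=0}^n g_l, and as ζ → 0 the structure constants of the direct-sum Lie bracket with respect to this basis converge to the structure constants of the polynomial Lie algebra g^(n): for all i, j, l, m, the coordinates of [Y^(l)_i(ζ), Y^(m)_j(ζ)] in the basis Y(ζ) tend to c^k_{ij} in the coordinate of Y^{(l+m)}_k when l+m ≤ n, and to 0 in all other coordinates (in particular the whole bracket tends to 0 in coordinates when l+m > n). -/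
open scoped BigOperators Topology

/-- The contracted basis elements `Y^{(l)}_i(ζ) = ∑_{s=0}^{n-l} ζ^{l·2^s} X^{(s)}_i` of the
direct sum `g^n = ⊕_{s=0}^n g_s` of `n+1` copies of `g` (realized as `Fin (n+1) → g`):
the component of `Y^{(l)}_i(ζ)` in the `s`-th copy is `ζ^{l·2^s} • b i` for `s ≤ n - l`
and `0` otherwise. -/
noncomputable def Yzeta {g : Type*} [AddCommGroup g] [Module ℂ g] {r : ℕ} (n : ℕ)
    (b : Module.Basis (Fin r) ℂ g) (ζ : ℂ) (l : ℕ) (i : Fin r) : Fin (n + 1) → g :=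
  fun s => if (s : ℕ) ≤ n - l then ζ ^ (l * 2 ^ (s : ℕ)) • b i else 0

noncomputable def rfun (n p q : ℕ) : ℕ → ℂ → ℂ
  | t => fun ζ =>
    (if q ≤ t ∧ t < p then ζ ^ ((p - t - 1) * 2 ^ (n - t)) else 0)
      - ∑ u ∈ (Finset.range t).attach,
          ζ ^ (2 ^ (n - u.1) + u.1 * 2 ^ (n - t) - (t + 1) * 2 ^ (n - t)) * rfun n p q u.1 ζ
  decreasing_by exact Finset.mem_range.mp u.2

noncomputable def afun (n p q t : ℕ) (ζ : ℂ) : ℂ :=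
  (if t = p ∧ p ≤ n then 1 else 0) + ζ ^ (2 ^ (n - t)) * rfun n p q t ζ

lemma rfun_continuous (n p q : ℕ) : ∀ t, Continuous (rfun n p q t) := by
  intro t
  induction t using Nat.strong_induction_on with
  | _ t ih =>
    rw [rfun]
    apply Continuous.sub
    · split_ifs
      · exact continuous_pow _
      · exact continuous_const
    · exact continuous_finset_sum _ fun u _ =>
        (continuous_pow _).mul (ih u.1 (Finset.mem_range.mp u.2))

lemma afun_tendsto (n p q t : ℕ) :
    Filter.Tendsto (afun n p q t) (𝓝[≠] (0 : ℂ))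
      (𝓝 (if t = p ∧ p ≤ n then (1:ℂ) else 0)) := by
  have hc : Continuous (afun n p q t) := by
    unfold afun
    exact continuous_const.add ((continuous_pow _).mul (rfun_continuous n p q t))
  have h0 : afun n p q t 0 = (if t = p ∧ p ≤ n then (1:ℂ) else 0) := by
    unfold afun
    rw [zero_pow (by positivity), zero_mul, add_zero]
  have := hc.tendsto 0
  rw [h0] at this
  exact this.mono_left nhdsWithin_le_nhds

open scoped BigOperators Topology

lemma row_id (n p q : ℕ) (hqp : q ≤ p) (ζ : ℂ) (s : ℕ) (hs : s ≤ n) :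
    ∑ u ∈ Finset.range (n - s + 1), afun n p q u ζ * ζ ^ (u * 2 ^ s) =
      if s + q ≤ n then ζ ^ (p * 2 ^ s) else 0 := by
  set t := n - s with ht
  have hnt : n - t = s := Nat.sub_sub_self hs
  have hexp : ∀ u, u < t → (t + 1) * 2 ^ s ≤ 2 ^ (n - u) + u * 2 ^ s := by
    intro u hu
    have h1 : 2 ^ (n - u) = 2 ^ (t - u) * 2 ^ s := by
      rw [← pow_add]; congr 1; omega
    have h2 : t - u < 2 ^ (t - u) := Nat.lt_two_pow_self
    have h4 : (t - u + 1) + u ≤ 2 ^ (t - u) + u :=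
      Nat.add_le_add_right (Nat.succ_le_of_lt h2) u
    have h5 : (t - u + 1) + u = t + 1 := by omega
    rw [h5] at h4
    calc (t + 1) * 2 ^ s ≤ (2 ^ (t - u) + u) * 2 ^ s := Nat.mul_le_mul_right _ h4
      _ = 2 ^ (t - u) * 2 ^ s + u * 2 ^ s := by ring
      _ = 2 ^ (n - u) + u * 2 ^ s := by rw [h1]
  simp only [afun, add_mul]
  rw [Finset.sum_add_distrib]
  have hS1 : ∑ u ∈ Finset.range (t + 1),
      (if u = p ∧ p ≤ n then (1:ℂ) else 0) * ζ ^ (u * 2 ^ s)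
      = if p ≤ t then ζ ^ (p * 2 ^ s) else 0 := by
    by_cases hpn : p ≤ n
    · simp only [hpn, and_true, ite_mul, one_mul, zero_mul]
      rw [Finset.sum_ite_eq' (Finset.range (t + 1)) p (fun u => ζ ^ (u * 2 ^ s))]
      simp [Finset.mem_range, Nat.lt_succ_iff]
    · have h1 : ∀ u, ¬(u = p ∧ p ≤ n) := fun u h => hpn h.2
      simp only [h1, if_false, zero_mul, Finset.sum_const_zero]
      rw [if_neg (by omega)]
  have hgen : ∀ (a b c d e : ℕ) (x : ℂ), a + b = c + d + e →
      ζ ^ c * (ζ ^ d * x) * ζ ^ e = ζ ^ a * x * ζ ^ b := by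
    intro a b c d e x h
    calc ζ ^ c * (ζ ^ d * x) * ζ ^ e = ζ ^ (c + d + e) * x := by
          rw [pow_add, pow_add]; ring
      _ = ζ ^ (a + b) * x := by rw [h]
      _ = ζ ^ a * x * ζ ^ b := by rw [pow_add]; ring
  have hlast : ζ ^ (2 ^ (n - t)) * rfun n p q t ζ * ζ ^ (t * 2 ^ s)
      = (if q ≤ t ∧ t < p then ζ ^ (p * 2 ^ s) else 0)
        - ∑ u ∈ Finset.range t, ζ ^ (2 ^ (n - u)) * rfun n p q u ζ * ζ ^ (u * 2 ^ s) := by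
    rw [rfun, hnt]
    beta_reduce
    rw [Finset.sum_attach (Finset.range t)
      (fun u => ζ ^ (2 ^ (n - u) + u * 2 ^ s - (t + 1) * 2 ^ s) * rfun n p q u ζ)]
    rw [mul_sub, sub_mul, Finset.mul_sum, Finset.sum_mul]
    congr 1
    · split_ifs with h
      · obtain ⟨d, hd⟩ : ∃ d, p = t + 1 + d := ⟨p - (t + 1), by omega⟩
        have h1 : p - t - 1 = d := by omega
        rw [h1, hd, mul_comm (ζ ^ 2 ^ s), mul_assoc, ← pow_add, ← pow_add]
        congr 1
        ring
      · rw [mul_zero, zero_mul]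
    · apply Finset.sum_congr rfl
      intro u hu
      have hu' : u < t := Finset.mem_range.mp hu
      obtain ⟨D, hD⟩ : ∃ D, 2 ^ (n - u) + u * 2 ^ s = 2 ^ s + D + t * 2 ^ s := by
        refine ⟨2 ^ (n - u) + u * 2 ^ s - (t + 1) * 2 ^ s, ?_⟩
        have := hexp u hu'
        have h2 : (t + 1) * 2 ^ s = 2 ^ s + t * 2 ^ s := by ring
        omega
      have hE : 2 ^ (n - u) + u * 2 ^ s - (t + 1) * 2 ^ s = D := by
        have h2 : (t + 1) * 2 ^ s = 2 ^ s + t * 2 ^ s := by ring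
        omega
      rw [hE]
      exact hgen _ _ _ _ _ (rfun n p q u ζ) hD
  rw [hS1, Finset.sum_range_succ, hlast]
  have hre : ∀ (x y z : ℂ), x + (z + (y - z)) = x + y := by intro x y z; ring
  rw [hre]
  split_ifs with h1 h2 h3 <;> try ring
  all_goals (exfalso; omega)

noncomputable def Amat (n : ℕ) (ζ : ℂ) : Matrix (Fin (n + 1)) (Fin (n + 1)) ℂ :=
  Matrix.of fun s t => if (s : ℕ) + (t : ℕ) ≤ n then ζ ^ ((t : ℕ) * 2 ^ (s : ℕ)) else 0

lemma Yzeta_eq {g : Type*} [AddCommGroup g] [Module ℂ g] {r : ℕ} (n : ℕ)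
    (b : Module.Basis (Fin r) ℂ g) (ζ : ℂ) (t : Fin (n + 1)) (k : Fin r) (s : Fin (n + 1)) :
    Yzeta n b ζ (t : ℕ) k s = Amat n ζ s t • b k := by
  have ht := t.isLt
  unfold Yzeta Amat
  by_cases h : (s : ℕ) + (t : ℕ) ≤ n
  · rw [Matrix.of_apply, if_pos h, if_pos (by omega)]
  · rw [Matrix.of_apply, if_neg h, if_neg (by omega), zero_smul]

lemma key_sum (n p q : ℕ) (hqp : q ≤ p) (ζ : ℂ) (s : Fin (n + 1)) :
    ∑ t : Fin (n + 1), afun n p q (t : ℕ) ζ * Amat n ζ s t =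
      if (s : ℕ) + q ≤ n then ζ ^ (p * 2 ^ (s : ℕ)) else 0 := by
  have hs : (s : ℕ) ≤ n := by have := s.isLt; omega
  have h1 : ∀ t : Fin (n + 1), afun n p q (t : ℕ) ζ * Amat n ζ s t
      = (fun u : ℕ => afun n p q u ζ *
          (if (s : ℕ) + u ≤ n then ζ ^ (u * 2 ^ (s : ℕ)) else 0)) (t : ℕ) := fun t => rfl
  rw [Finset.sum_congr rfl (fun t _ => h1 t),
    Fin.sum_univ_eq_sum_range
      (fun u => afun n p q u ζ * if (s : ℕ) + u ≤ n then ζ ^ (u * 2 ^ (s : ℕ)) else 0) (n + 1)]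
  have hsub : Finset.range (n - (s : ℕ) + 1) ⊆ Finset.range (n + 1) :=
    Finset.range_subset_range.mpr (by omega)
  have hvan : ∀ u ∈ Finset.range (n + 1), u ∉ Finset.range (n - (s : ℕ) + 1) →
      afun n p q u ζ * (if (s : ℕ) + u ≤ n then ζ ^ (u * 2 ^ (s : ℕ)) else 0) = 0 := by
    intro u _ hnu
    simp only [Finset.mem_range] at hnu
    rw [if_neg (by omega), mul_zero]
  rw [← Finset.sum_subset hsub hvan]
  have hpos : ∀ u ∈ Finset.range (n - (s : ℕ) + 1),
      afun n p q u ζ * (if (s : ℕ) + u ≤ n then ζ ^ (u * 2 ^ (s : ℕ)) else 0)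
        = afun n p q u ζ * ζ ^ (u * 2 ^ (s : ℕ)) := by
    intro u hu
    simp only [Finset.mem_range] at hu
    rw [if_pos (by omega)]
  rw [Finset.sum_congr rfl hpos]
  exact row_id n p q hqp ζ (s : ℕ) hs


/-- For every `ζ ≠ 0` the `Y^{(l)}_i(ζ)` form a basis of `g^n`, and as `ζ → 0` the
structure constants of the componentwise (direct sum) Lie bracket with respect to this
basis converge to the structure constants of the polynomial Lie algebra `g^{(n)}`:
the coordinate of `⁅Y^{(l)}_i(ζ), Y^{(m)}_j(ζ)⁆` along `Y^{(s)}_k(ζ)` tends to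
`c^k_{ij}` if `l + m ≤ n` and `s = l + m`, and to `0` otherwise. -/
theorem stmt5 {g : Type*} [LieRing g] [LieAlgebra ℂ g] {r : ℕ}
    (n : ℕ) (b : Module.Basis (Fin r) ℂ g) (c : Fin r → Fin r → Fin r → ℂ)
    (hc : ∀ i j : Fin r, ⁅b i, b j⁆ = ∑ k : Fin r, c i j k • b k) :
    (∀ ζ : ℂ, ζ ≠ 0 →
      LinearIndependent ℂ (fun p : Fin (n + 1) × Fin r => Yzeta n b ζ (p.1 : ℕ) p.2) ∧
      Submodule.span ℂ
        (Set.range fun p : Fin (n + 1) × Fin r => Yzeta n b ζ (p.1 : ℕ) p.2) = ⊤) ∧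
    (∀ (l m : Fin (n + 1)) (i j : Fin r),
      ∃ coef : ℂ → Fin (n + 1) → Fin r → ℂ,
        (∀ ζ : ℂ, ζ ≠ 0 →
          (fun s : Fin (n + 1) => ⁅Yzeta n b ζ (l : ℕ) i s, Yzeta n b ζ (m : ℕ) j s⁆) =
            ∑ s : Fin (n + 1), ∑ k : Fin r, coef ζ s k • Yzeta n b ζ (s : ℕ) k) ∧
        (∀ (s : Fin (n + 1)) (k : Fin r),
          Filter.Tendsto (fun ζ : ℂ => coef ζ s k) (𝓝[≠] (0 : ℂ))
            (𝓝 (if (l : ℕ) + (m : ℕ) ≤ n ∧ (s : ℕ) = (l : ℕ) + (m : ℕ) then c i j k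
                else 0)))) := by
  constructor
  · intro ζ hζ
    have hdet : (Amat n ζ).det ≠ 0 := by
      set Bm := (Amat n ζ).submatrix (⇑(Fin.revPerm : Equiv.Perm (Fin (n + 1)))) id with hBm
      have hperm := Matrix.det_permute (Fin.revPerm : Equiv.Perm (Fin (n + 1))) (Amat n ζ)
      have hentry : ∀ a b' : Fin (n + 1), Bm a b'
          = if (n - (a : ℕ)) + (b' : ℕ) ≤ n then ζ ^ ((b' : ℕ) * 2 ^ (n - (a : ℕ))) else 0 := by
        intro a b'
        have ha := a.isLt
        rw [hBm, Matrix.submatrix_apply]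
        show (if ((Fin.rev a : Fin (n + 1)) : ℕ) + (b' : ℕ) ≤ n
            then ζ ^ ((b' : ℕ) * 2 ^ ((Fin.rev a : Fin (n + 1)) : ℕ)) else 0) = _
        have hrv : ((Fin.rev a : Fin (n + 1)) : ℕ) = n - (a : ℕ) := by
          rw [Fin.val_rev]; omega
        rw [hrv]
      have hlow : Matrix.BlockTriangular Bm OrderDual.toDual := by
        intro a b' hab
        have hab' : (a : ℕ) < (b' : ℕ) := hab
        have hb := b'.isLt
        rw [hentry a b', if_neg (by omega)]
      have hB : Bm.det ≠ 0 := by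
        rw [Matrix.det_of_lowerTriangular _ hlow]
        apply Finset.prod_ne_zero_iff.mpr
        intro i _
        rw [hentry i i, if_pos (by have := i.isLt; omega)]
        exact pow_ne_zero _ hζ
      have hBdet : Bm.det = ↑↑(Equiv.Perm.sign (Fin.revPerm : Equiv.Perm (Fin (n + 1)))) *
          (Amat n ζ).det := hperm
      intro h
      rw [hBdet, h, mul_zero] at hB
      exact hB rfl
    have hu : IsUnit (Amat n ζ).det := isUnit_iff_ne_zero.mpr hdet
    have hBA : (Amat n ζ)⁻¹ * Amat n ζ = 1 := Matrix.nonsing_inv_mul _ hu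
    have hAB : Amat n ζ * (Amat n ζ)⁻¹ = 1 := Matrix.mul_nonsing_inv _ hu
    constructor
    · rw [Fintype.linearIndependent_iff]
      intro d hd
      have hcoord : ∀ (s : Fin (n + 1)) (k : Fin r),
          ∑ t : Fin (n + 1), Amat n ζ s t * d (t, k) = 0 := by
        intro s k
        have h1 := congrFun hd s
        rw [Finset.sum_apply, Pi.zero_apply] at h1
        have h2 : ∑ x : Fin (n + 1) × Fin r, (Amat n ζ s x.1 * d x) • b x.2 = 0 := by
          rw [← h1]
          apply Finset.sum_congr rfl
          intro x _
          rw [Pi.smul_apply, Yzeta_eq n b ζ x.1 x.2 s, smul_smul, mul_comm]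
        rw [Fintype.sum_prod_type, Finset.sum_comm] at h2
        have h3 : ∑ k : Fin r, (∑ t : Fin (n + 1), Amat n ζ s t * d (t, k)) • b k = 0 := by
          rw [← h2]
          exact Finset.sum_congr rfl fun k _ => Finset.sum_smul
        exact Fintype.linearIndependent_iff.mp b.linearIndependent _ h3 k
      rintro ⟨t, k⟩
      have hv : (Amat n ζ).mulVec (fun t => d (t, k)) = 0 := funext fun s => hcoord s k
      have h5 : (fun t => d (t, k)) = 0 := by
        have h4 := congrArg (fun v => (Amat n ζ)⁻¹.mulVec v) hv
        simpa [Matrix.mulVec_mulVec, hBA, Matrix.one_mulVec, Matrix.mulVec_zero] using h4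
      exact congrFun h5 t
    · rw [eq_top_iff, ← (Pi.basis fun _ : Fin (n + 1) => b).span_eq]
      apply Submodule.span_le.mpr
      rintro x ⟨⟨s, k⟩, rfl⟩
      have hx : (Pi.basis fun _ : Fin (n + 1) => b) ⟨s, k⟩
          = ∑ t : Fin (n + 1), (Amat n ζ)⁻¹ t s • Yzeta n b ζ (t : ℕ) k := by
        funext s'
        rw [Pi.basis_apply, Finset.sum_apply]
        have h6 : ∀ t : Fin (n + 1), ((Amat n ζ)⁻¹ t s • Yzeta n b ζ (t : ℕ) k) s'
            = (Amat n ζ s' t * (Amat n ζ)⁻¹ t s) • b k := by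
          intro t
          rw [Pi.smul_apply, Yzeta_eq n b ζ t k s', smul_smul, mul_comm]
        rw [Finset.sum_congr rfl fun t _ => h6 t, ← Finset.sum_smul, ← Matrix.mul_apply, hAB,
          Matrix.one_apply, Pi.single_apply]
        split_ifs with h
        · rw [one_smul]
        · rw [zero_smul]
      rw [hx]
      exact Submodule.sum_mem _ fun t _ =>
        Submodule.smul_mem _ _ (Submodule.subset_span ⟨(t, k), rfl⟩)
  · intro l m i j
    set p := (l : ℕ) + (m : ℕ) with hp
    set q := max (l : ℕ) (m : ℕ) with hq
    have hqp : q ≤ p := max_le (Nat.le_add_right _ _) (Nat.le_add_left _ _)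
    refine ⟨fun ζ t k => c i j k * afun n p q (t : ℕ) ζ, ?_, ?_⟩
    · intro ζ hζ
      funext s
      have hR : (∑ t : Fin (n + 1), ∑ k : Fin r,
            (c i j k * afun n p q (t : ℕ) ζ) • Yzeta n b ζ (t : ℕ) k) s
          = ∑ k : Fin r,
              (c i j k * (if (s : ℕ) + q ≤ n then ζ ^ (p * 2 ^ (s : ℕ)) else 0)) • b k := by
        simp only [Finset.sum_apply, Pi.smul_apply]
        rw [Finset.sum_comm]
        apply Finset.sum_congr rfl
        intro k _
        rw [← key_sum n p q hqp ζ s, Finset.mul_sum, Finset.sum_smul]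
        apply Finset.sum_congr rfl
        intro t _
        rw [Yzeta_eq, smul_smul, mul_assoc]
      rw [hR, Yzeta_eq n b ζ l i s, Yzeta_eq n b ζ m j s, smul_lie, lie_smul, smul_smul, hc]
      have hA : Amat n ζ s l * Amat n ζ s m
          = if (s : ℕ) + q ≤ n then ζ ^ (p * 2 ^ (s : ℕ)) else 0 := by
        have hl := l.isLt
        have hm := m.isLt
        have hs := s.isLt
        unfold Amat
        rw [Matrix.of_apply, Matrix.of_apply]
        split_ifs with h1 h2 h3 h4 h5 <;>
          first
          | (exfalso; omega)
          | (rw [← pow_add]; congr 1; rw [← add_mul])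
          | ring
      rw [hA, Finset.smul_sum]
      apply Finset.sum_congr rfl
      intro k _
      rw [smul_smul, mul_comm]
    · intro t k
      have hval : (if (l : ℕ) + (m : ℕ) ≤ n ∧ (t : ℕ) = (l : ℕ) + (m : ℕ)
            then c i j k else 0)
          = c i j k * (if (t : ℕ) = p ∧ p ≤ n then 1 else 0) := by
        split_ifs with h1 h2 h3 <;> first | (exfalso; omega) | ring
      rw [hval]
      exact (afun_tendsto n p q (t : ℕ)).const_mul (c i j k)
end

section
/- For every k with 0 ≤ k ≤ n and every index p, there exist polynomials q^k_0,…,q^k_k ∈ ℂ[u] with deg(q^k_j) = 2^k − 2^j for 0 ≤ j ≤ k (in particular q^k_k is a nonzero constant, equal to 1) such that for all ζ ≠ 0, ζ^{2^k(n−k)} X^(k)_p = Σ_{j=0}^k q^k_j(ζ^{−1}) Y^{(n−j)}_p(ζ). -/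
open scoped BigOperators

open Polynomial

/-- `Paux k m` is the polynomial `q^k_{k-m}` defined by downward recursion. -/
noncomputable def Paux (k : ℕ) : ℕ → Polynomial ℂ
  | 0 => 1
  | (m+1) => -∑ t ∈ (Finset.range (m+1)).attach,
      Polynomial.X ^ ((m + 1 - t.1) * 2 ^ (k - (m+1))) * Paux k t.1
  termination_by m => m
  decreasing_by exact Finset.mem_range.mp t.2

lemma Paux_zero (k : ℕ) : Paux k 0 = 1 := by rw [Paux]

lemma Paux_succ (k m : ℕ) :
    Paux k (m+1) = -∑ t ∈ Finset.range (m+1),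
      Polynomial.X ^ ((m + 1 - t) * 2 ^ (k - (m+1))) * Paux k t := by
  rw [Paux]
  congr 1
  exact Finset.sum_attach (Finset.range (m+1))
    (fun t => Polynomial.X ^ ((m + 1 - t) * 2 ^ (k - (m+1))) * Paux k t)

lemma Paux_key (k m : ℕ) :
    ∑ i ∈ Finset.range (m+1), Polynomial.X ^ ((m - i) * 2 ^ (k - m)) * Paux k i
      = if m = 0 then 1 else 0 := by
  cases m with
  | zero => simp [Paux_zero]
  | succ m' =>
    rw [Finset.sum_range_succ]
    simp only [Nat.sub_self, zero_mul, pow_zero, one_mul, Paux_succ,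
      Nat.succ_ne_zero, if_neg, add_neg_cancel]
    simp

lemma two_pow_gt (d : ℕ) (hd : 2 ≤ d) : d + 1 < 2 ^ d := by
  induction d with
  | zero => omega
  | succ d ih =>
    rcases Nat.lt_or_ge d 2 with h | h
    · interval_cases d
      · omega
      · norm_num
    · have := ih h; rw [pow_succ]; omega

lemma arith1 (E A B C : ℕ) (h1 : E + A ≤ B) (h2 : B ≤ C) : E + (C - B) ≤ C - A := by omega

lemma arith2 (E A B C : ℕ) (h1 : E + A < B) (h2 : B ≤ C) : E + (C - B) < C - A := by omega

lemma Paux_deg (k : ℕ) : ∀ m, m ≤ k →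
    (Paux k m).natDegree = 2 ^ k - 2 ^ (k - m) ∧ (Paux k m).leadingCoeff = (-1) ^ m := by
  intro m
  induction m using Nat.strong_induction_on with
  | _ m ih =>
    match m with
    | 0 => intro _; simp [Paux_zero]
    | m' + 1 =>
      intro hm
      set D : ℕ := 2 ^ k - 2 ^ (k - (m' + 1)) with hD
      set f : ℕ → Polynomial ℂ :=
        fun t => Polynomial.X ^ ((m' + 1 - t) * 2 ^ (k - (m' + 1))) * Paux k t with hf
      have hXne : ∀ a : ℕ, (Polynomial.X : Polynomial ℂ) ^ a ≠ 0 :=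
        fun a => pow_ne_zero a X_ne_zero
      have hdegf : ∀ t, t ≤ m' → (f t).natDegree ≤ D ∧ (t < m' → (f t).natDegree < D) := by
        intro t ht
        obtain ⟨hdt, hlt⟩ := ih t (by omega) (by omega)
        have hne : Paux k t ≠ 0 := fun h0 => by
          rw [h0, leadingCoeff_zero] at hlt
          exact (pow_ne_zero t (by norm_num : (-1:ℂ) ≠ 0)) hlt.symm
        have hmul : (f t).natDegree
            = (m' + 1 - t) * 2 ^ (k - (m' + 1)) + (2 ^ k - 2 ^ (k - t)) := by
          rw [hf]
          rw [natDegree_mul (hXne _) hne, natDegree_X_pow, hdt]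
        have heq : (m' + 1 - t + 1) * 2 ^ (k - (m' + 1))
            = (m' + 1 - t) * 2 ^ (k - (m' + 1)) + 2 ^ (k - (m' + 1)) := by ring
        have h1 : (m' + 1 - t) * 2 ^ (k - (m' + 1)) + 2 ^ (k - (m' + 1)) ≤ 2 ^ (k - t) := by
          rw [← heq]
          have hkt : k - t = (k - (m' + 1)) + (m' + 1 - t) := by omega
          rw [hkt, pow_add]
          calc (m' + 1 - t + 1) * 2 ^ (k - (m' + 1))
              ≤ 2 ^ (m' + 1 - t) * 2 ^ (k - (m' + 1)) :=
                Nat.mul_le_mul_right _ Nat.lt_two_pow_self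
            _ = 2 ^ (k - (m' + 1)) * 2 ^ (m' + 1 - t) := by ring
        have h1' : t < m' →
            (m' + 1 - t) * 2 ^ (k - (m' + 1)) + 2 ^ (k - (m' + 1)) < 2 ^ (k - t) := by
          intro htm
          rw [← heq]
          have hkt : k - t = (k - (m' + 1)) + (m' + 1 - t) := by omega
          rw [hkt, pow_add]
          calc (m' + 1 - t + 1) * 2 ^ (k - (m' + 1))
              < 2 ^ (m' + 1 - t) * 2 ^ (k - (m' + 1)) :=
                (Nat.mul_lt_mul_right (Nat.pow_pos (by norm_num))).mpr
                  (two_pow_gt _ (by omega))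
            _ = 2 ^ (k - (m' + 1)) * 2 ^ (m' + 1 - t) := by ring
        have h2 : 2 ^ (k - t) ≤ 2 ^ k := Nat.pow_le_pow_right (by norm_num) (by omega)
        constructor
        · rw [hmul, hD]; exact arith1 _ _ _ _ h1 h2
        · intro htm; rw [hmul, hD]; exact arith2 _ _ _ _ (h1' htm) h2
      have hlast : (f m').natDegree = D ∧ (f m').leadingCoeff = (-1 : ℂ) ^ m' := by
        obtain ⟨hdt, hlt⟩ := ih m' (by omega) (by omega)
        have hne : Paux k m' ≠ 0 := fun h0 => by
          rw [h0, leadingCoeff_zero] at hlt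
          exact (pow_ne_zero m' (by norm_num : (-1:ℂ) ≠ 0)) hlt.symm
        constructor
        · rw [hf]
          rw [natDegree_mul (hXne _) hne, natDegree_X_pow, hdt, hD]
          have hd1 : m' + 1 - m' = 1 := by omega
          have hkm : k - m' = (k - (m' + 1)) + 1 := by omega
          rw [hd1, one_mul, hkm, pow_succ]
          have h2 : 2 ^ (k - (m' + 1)) * 2 ≤ 2 ^ k := by
            rw [← pow_succ, ← hkm]
            exact Nat.pow_le_pow_right (by norm_num) (by omega)
          generalize 2 ^ (k - (m' + 1)) = A at h2 ⊢
          generalize 2 ^ k = C at h2 ⊢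
          omega
        · rw [hf, leadingCoeff_mul, leadingCoeff_X_pow, one_mul, hlt]
      have hsum : Paux k (m' + 1) = -∑ t ∈ Finset.range (m' + 1), f t := Paux_succ k m'
      have hcoeff : (∑ t ∈ Finset.range (m' + 1), f t).coeff D = (-1) ^ m' := by
        rw [Finset.sum_range_succ, coeff_add]
        have h0 : (∑ t ∈ Finset.range m', f t).coeff D = 0 := by
          rw [finset_sum_coeff]
          refine Finset.sum_eq_zero fun t ht => ?_
          exact coeff_eq_zero_of_natDegree_lt
            ((hdegf t (by simp at ht; omega)).2 (Finset.mem_range.mp ht))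
        rw [h0, zero_add, ← hlast.1, coeff_natDegree, hlast.2]
      have hdle : (∑ t ∈ Finset.range (m' + 1), f t).natDegree ≤ D :=
        natDegree_sum_le_of_forall_le _ _ (fun t ht => (hdegf t (by simp at ht; omega)).1)
      have hdeq : (∑ t ∈ Finset.range (m' + 1), f t).natDegree = D := by
        refine le_antisymm hdle (le_natDegree_of_ne_zero ?_)
        rw [hcoeff]
        exact pow_ne_zero _ (by norm_num)
      constructor
      · rw [hsum, natDegree_neg, hdeq]
      · rw [hsum, leadingCoeff_neg, Polynomial.leadingCoeff, hdeq, hcoeff]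
        ring

lemma scalar_id (n k : ℕ) (hk : k ≤ n) (ζ : ℂ) (hζ : ζ ≠ 0) (c : ℕ) (hc : c ≤ n) :
    (if c = k then ζ ^ (2 ^ k * (n - k)) else 0)
      = ∑ j ∈ Finset.range (k + 1),
          (Paux k (k - j)).eval ζ⁻¹ * (if c ≤ n - (n - j) then ζ ^ ((n - j) * 2 ^ c) else 0) := by
  have hsub : ∀ j, j ≤ k → n - (n - j) = j := fun j hj => by omega
  by_cases hck : c ≤ k
  · have hstep : ∀ j ∈ Finset.range (k + 1),
        (Paux k (k - j)).eval ζ⁻¹ * (if c ≤ n - (n - j) then ζ ^ ((n - j) * 2 ^ c) else 0)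
          = if c ≤ j then (Paux k (k - j)).eval ζ⁻¹ * ζ ^ ((n - j) * 2 ^ c) else 0 := by
      intro j hj
      rw [hsub j (by simpa using Nat.lt_succ_iff.mp (Finset.mem_range.mp hj))]
      split_ifs <;> simp
    rw [Finset.sum_congr rfl hstep, ← Finset.sum_filter]
    have hfil : (Finset.range (k + 1)).filter (fun j => c ≤ j) = Finset.Icc c k := by
      ext j; simp [Finset.mem_filter, Finset.mem_range, Nat.lt_succ_iff]; omega
    rw [hfil]
    have hbij : ∑ j ∈ Finset.Icc c k, (Paux k (k - j)).eval ζ⁻¹ * ζ ^ ((n - j) * 2 ^ c)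
        = ∑ i ∈ Finset.range (k - c + 1),
            (Paux k i).eval ζ⁻¹ * ζ ^ ((n - (k - i)) * 2 ^ c) := by
      refine Finset.sum_nbij' (fun j => k - j) (fun i => k - i) ?_ ?_ ?_ ?_ ?_
      · intro j hj; simp only [Finset.mem_Icc] at hj; simp [Finset.mem_range]; omega
      · intro i hi; simp only [Finset.mem_range] at hi; simp [Finset.mem_Icc]; omega
      · intro j hj; simp only [Finset.mem_Icc] at hj; omega
      · intro i hi; simp only [Finset.mem_range] at hi; omega
      · intro j hj; simp only [Finset.mem_Icc] at hj
        have h1 : k - (k - j) = j := by omega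
        rw [h1]
    rw [hbij]
    have hterm : ∀ i ∈ Finset.range (k - c + 1),
        (Paux k i).eval ζ⁻¹ * ζ ^ ((n - (k - i)) * 2 ^ c)
          = ζ ^ ((n - c) * 2 ^ c) *
            ((Polynomial.X ^ ((k - c - i) * 2 ^ (k - (k - c))) * Paux k i).eval ζ⁻¹) := by
      intro i hi
      simp only [Finset.mem_range] at hi
      rw [eval_mul, eval_pow, eval_X]
      have hkc : k - (k - c) = c := by omega
      rw [hkc]
      have hpow : ζ ^ ((n - (k - i)) * 2 ^ c) * ζ ^ ((k - c - i) * 2 ^ c)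
          = ζ ^ ((n - c) * 2 ^ c) := by
        rw [← pow_add]
        congr 1
        have : (n - (k - i)) + (k - c - i) = n - c := by omega
        rw [← Nat.add_mul, this]
      rw [inv_pow, ← hpow]
      have hne : ζ ^ ((k - c - i) * 2 ^ c) ≠ 0 := pow_ne_zero _ hζ
      field_simp
    rw [Finset.sum_congr rfl hterm, ← Finset.mul_sum, ← eval_finset_sum]
    rw [Paux_key k (k - c)]
    by_cases hceq : c = k
    · subst hceq
      simp [Nat.sub_self, mul_comm]
    · have : k - c ≠ 0 := by omega
      simp [this, hceq]
  · rw [Finset.sum_eq_zero, if_neg (by omega)]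
    intro j hj
    simp only [Finset.mem_range, Nat.lt_succ_iff] at hj
    rw [hsub j hj, if_neg (by omega), mul_zero]

/-- For `0 ≤ k ≤ n` there are polynomials `q^k_0, …, q^k_k` with `deg q^k_j = 2^k − 2^j`
(and `q^k_k = 1`) such that for all `ζ ≠ 0`,
`ζ^{2^k(n−k)} X^{(k)}_p = ∑_{j=0}^k q^k_j(ζ⁻¹) Y^{(n−j)}_p(ζ)`, where `X^{(k)}_p` is the
element of `g^n` whose only nonzero component is `b p` in the `k`-th copy. -/
theorem stmt6 {g : Type*} [AddCommGroup g] [Module ℂ g] {r : ℕ}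
    (n k : ℕ) (hk : k ≤ n) (b : Module.Basis (Fin r) ℂ g) (p : Fin r) :
    ∃ q : ℕ → Polynomial ℂ,
      (∀ j : ℕ, j ≤ k → (q j).natDegree = 2 ^ k - 2 ^ j) ∧
      q k = 1 ∧
      ∀ ζ : ℂ, ζ ≠ 0 →
        (fun s : Fin (n + 1) => if (s : ℕ) = k then ζ ^ (2 ^ k * (n - k)) • (b p) else 0) =
          ∑ j ∈ Finset.range (k + 1), (q j).eval ζ⁻¹ • Yzeta n b ζ (n - j) p := by
  refine ⟨fun j => Paux k (k - j), ?_, ?_, ?_⟩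
  · intro j hj
    have h := (Paux_deg k (k - j) (Nat.sub_le k j)).1
    rw [h]
    have : k - (k - j) = j := by omega
    rw [this]
  · simp [Nat.sub_self, Paux_zero]
  · intro ζ hζ
    funext s
    have hgoal := scalar_id n k hk ζ hζ (s : ℕ) (by omega)
    have hL : (if (s : ℕ) = k then ζ ^ (2 ^ k * (n - k)) • (b p) else 0)
        = (if (s : ℕ) = k then ζ ^ (2 ^ k * (n - k)) else 0) • b p := by
      split_ifs <;> simp
    have hR : (∑ j ∈ Finset.range (k + 1),
          (Paux k (k - j)).eval ζ⁻¹ • Yzeta n b ζ (n - j) p) s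
        = (∑ j ∈ Finset.range (k + 1),
            (Paux k (k - j)).eval ζ⁻¹ *
              (if (s : ℕ) ≤ n - (n - j) then ζ ^ ((n - j) * 2 ^ (s : ℕ)) else 0)) • b p := by
      rw [Finset.sum_apply, Finset.sum_smul]
      refine Finset.sum_congr rfl fun j hj => ?_
      simp only [Pi.smul_apply, Yzeta]
      split_ifs <;> simp [smul_smul]
    rw [hR, hL, ← hgoal]
end

section
/- Let a_0,…,a_n be complex numbers with a_n ≠ 0, and for ζ ≠ 0 let d_0(ζ),…,d_n(ζ) be the unique solution of the linear system Σ_{l=0}^{n−k} ζ^{k·2^l} d_l(ζ) = a_k for k = 0,…,n (this system is triangular in the sense that the k-th equation involves only d_0,…,d_{n−k}, so it has a unique solution for ζ ≠ 0). Then for each k, ζ^{(n−k)2^k} d_k(ζ) is asymptotic to (−1)^k a_n ζ^{−2^k+1} as ζ → 0, i.e. lim_{ζ→0} ζ^{(n−k)2^k + 2^k − 1} d_k(ζ) = (−1)^k a_n. -/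
open scoped BigOperators Topology
open Fin.NatCast

noncomputable def Dsol (a : ℕ → ℂ) (n : ℕ) (ζ : ℂ) : ℕ → ℂ
  | m => (ζ ^ ((n - m) * 2 ^ m))⁻¹ *
      (a (n - m) - ∑ l ∈ (Finset.range m).attach,
        ζ ^ ((n - m) * 2 ^ (l : ℕ)) * Dsol a n ζ l)
  decreasing_by exact Finset.mem_range.mp l.2

lemma Dsol_eq (a : ℕ → ℂ) (n : ℕ) (ζ : ℂ) (m : ℕ) :
    Dsol a n ζ m = (ζ ^ ((n - m) * 2 ^ m))⁻¹ *
      (a (n - m) - ∑ l ∈ Finset.range m, ζ ^ ((n - m) * 2 ^ l) * Dsol a n ζ l) := by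
  rw [Dsol, ← Finset.sum_attach (Finset.range m) (fun l => ζ ^ ((n - m) * 2 ^ l) * Dsol a n ζ l)]

lemma aux_le (k l : ℕ) (h : l < k) : (k - l + 1) * 2 ^ l ≤ 2 ^ k := by
  have h1 : k - l < 2 ^ (k - l) := Nat.lt_two_pow_self
  calc (k - l + 1) * 2 ^ l ≤ 2 ^ (k - l) * 2 ^ l := Nat.mul_le_mul_right _ (by omega)
    _ = 2 ^ k := by rw [← pow_add]; congr 1; omega

lemma aux_lt (k l : ℕ) (h : l + 1 < k) : (k - l + 1) * 2 ^ l < 2 ^ k := by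
  have haux : ∀ j : ℕ, 2 ≤ j → j + 1 < 2 ^ j := by
    intro j hj
    induction j with
    | zero => omega
    | succ m ih =>
      rcases Nat.lt_or_ge m 2 with hm | hm
      · interval_cases m
        · omega
        · norm_num
      · have := ih hm
        rw [pow_succ]; omega
  have h1 : k - l + 1 < 2 ^ (k - l) := haux (k - l) (by omega)
  calc (k - l + 1) * 2 ^ l < 2 ^ (k - l) * 2 ^ l :=
        Nat.mul_lt_mul_of_lt_of_le h1 le_rfl (Nat.pow_pos (by norm_num))
    _ = 2 ^ k := by rw [← pow_add]; congr 1; omega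

lemma aux_exp (n k l : ℕ) (hlk : l < k) (hkn : k ≤ n) :
    2 ^ k - 1 + (n - k) * 2 ^ l
      = (2 ^ k - (k - l + 1) * 2 ^ l) + ((n - l) * 2 ^ l + 2 ^ l - 1) := by
  have h1 : (k - l + 1) * 2 ^ l ≤ 2 ^ k := aux_le k l hlk
  have h2 : (n - l) * 2 ^ l = (n - k) * 2 ^ l + (k - l) * 2 ^ l := by
    rw [← Nat.add_mul]; congr 1; omega
  have h3 : (k - l + 1) * 2 ^ l = (k - l) * 2 ^ l + 2 ^ l := by
    rw [Nat.add_mul, one_mul]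
  have h4 : 1 ≤ 2 ^ l := Nat.one_le_two_pow
  omega

/-- For `a_n ≠ 0`, the triangular linear system
`∑_{l=0}^{n-k} ζ^{k·2^l} d_l(ζ) = a_k` (`k = 0,…,n`) has a unique solution for every
`ζ ≠ 0`, and each solution satisfies the asymptotics
`ζ^{(n−k)2^k} d_k(ζ) ∼ (−1)^k a_n ζ^{−2^k+1}` as `ζ → 0`, i.e.
`lim_{ζ→0} ζ^{(n−k)2^k + 2^k − 1} d_k(ζ) = (−1)^k a_n`. -/
theorem stmt7 (n : ℕ) (a : ℕ → ℂ) (han : a n ≠ 0) :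
    (∀ ζ : ℂ, ζ ≠ 0 →
      ∃! dv : Fin (n + 1) → ℂ,
        ∀ k : Fin (n + 1),
          ∑ l ∈ Finset.range (n - (k : ℕ) + 1),
            ζ ^ ((k : ℕ) * 2 ^ l) * dv (l : Fin (n + 1)) = a (k : ℕ)) ∧
    (∀ d : ℂ → ℕ → ℂ,
      (∀ ζ : ℂ, ζ ≠ 0 → ∀ k : ℕ, k ≤ n →
        ∑ l ∈ Finset.range (n - k + 1), ζ ^ (k * 2 ^ l) * d ζ l = a k) →
      ∀ k : ℕ, k ≤ n →
        Filter.Tendsto (fun ζ : ℂ => ζ ^ ((n - k) * 2 ^ k + 2 ^ k - 1) * d ζ k)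
          (𝓝[≠] (0 : ℂ)) (𝓝 ((-1) ^ k * a n))) := by
  constructor
  · -- existence and uniqueness
    intro ζ hζ
    have huniq : ∀ dv1 dv2 : Fin (n + 1) → ℂ,
        (∀ k : Fin (n + 1), ∑ l ∈ Finset.range (n - (k : ℕ) + 1),
          ζ ^ ((k : ℕ) * 2 ^ l) * dv1 (l : Fin (n + 1)) = a (k : ℕ)) →
        (∀ k : Fin (n + 1), ∑ l ∈ Finset.range (n - (k : ℕ) + 1),
          ζ ^ ((k : ℕ) * 2 ^ l) * dv2 (l : Fin (n + 1)) = a (k : ℕ)) →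
        dv1 = dv2 := by
      intro dv1 dv2 h1 h2
      have key : ∀ m, m ≤ n → dv1 (m : Fin (n + 1)) = dv2 (m : Fin (n + 1)) := by
        intro m
        induction m using Nat.strong_induction_on with
        | _ m IH =>
        intro hm
        have hv : (((n - m : ℕ) : Fin (n + 1)) : ℕ) = n - m :=
          Fin.val_cast_of_lt (by omega)
        have e1 := h1 ((n - m : ℕ) : Fin (n + 1))
        have e2 := h2 ((n - m : ℕ) : Fin (n + 1))
        rw [hv, Nat.sub_sub_self hm, Finset.sum_range_succ] at e1 e2
        have hS : ∑ l ∈ Finset.range m, ζ ^ ((n - m) * 2 ^ l) * dv1 (l : Fin (n + 1))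
            = ∑ l ∈ Finset.range m, ζ ^ ((n - m) * 2 ^ l) * dv2 (l : Fin (n + 1)) := by
          refine Finset.sum_congr rfl fun l hl => ?_
          have hlm := Finset.mem_range.mp hl
          rw [IH l hlm (by omega)]
        have hcan : ζ ^ ((n - m) * 2 ^ m) * dv1 ((m : ℕ) : Fin (n + 1))
            = ζ ^ ((n - m) * 2 ^ m) * dv2 ((m : ℕ) : Fin (n + 1)) := by
          have h3 := e1.trans e2.symm
          rw [hS] at h3
          exact add_left_cancel h3
        exact mul_left_cancel₀ (pow_ne_zero _ hζ) hcan
      funext i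
      have h4 := key i.val (Nat.lt_succ_iff.mp i.isLt)
      rwa [Fin.cast_val_eq_self] at h4
    have hsat : ∀ k : Fin (n + 1),
        ∑ l ∈ Finset.range (n - (k : ℕ) + 1),
          ζ ^ ((k : ℕ) * 2 ^ l) * (fun i : Fin (n + 1) => Dsol a n ζ i.val) (l : Fin (n + 1))
            = a (k : ℕ) := by
      intro k
      have hk : (k : ℕ) ≤ n := Nat.lt_succ_iff.mp k.isLt
      have hm : n - (n - (k : ℕ)) = (k : ℕ) := Nat.sub_sub_self hk
      simp only
      have hsum : ∀ l ∈ Finset.range (n - (k : ℕ) + 1),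
          ζ ^ ((k : ℕ) * 2 ^ l) * Dsol a n ζ ((l : Fin (n + 1)) : ℕ)
            = ζ ^ ((n - (n - (k : ℕ))) * 2 ^ l) * Dsol a n ζ l := by
        intro l hl
        have h1 : l < n + 1 := by have := Finset.mem_range.mp hl; omega
        rw [Fin.val_cast_of_lt h1, hm]
      rw [Finset.sum_congr rfl hsum, Finset.sum_range_succ, Dsol_eq, ← mul_assoc,
        mul_inv_cancel₀ (pow_ne_zero _ hζ), one_mul, hm]
      ring
    exact ⟨fun i => Dsol a n ζ i.val, hsat, fun y hy => huniq y _ hy hsat⟩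
  · -- asymptotics
    intro d hd k
    induction k using Nat.strong_induction_on with
    | _ k IH =>
    intro hk
    -- the basic vanishing limit
    have hzero : ∀ m : ℕ, 0 < m →
        Filter.Tendsto (fun ζ : ℂ => ζ ^ m) (𝓝[≠] (0 : ℂ)) (𝓝 0) := by
      intro m hm
      have h1 : Filter.Tendsto (fun ζ : ℂ => ζ ^ m) (𝓝 (0 : ℂ)) (𝓝 0) := by
        simpa [zero_pow hm.ne'] using (continuous_pow m).tendsto (0 : ℂ)
      exact h1.mono_left nhdsWithin_le_nhds
    -- key pointwise identity
    have hkey : ∀ ζ : ℂ, ζ ≠ 0 →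
        ζ ^ ((n - k) * 2 ^ k + 2 ^ k - 1) * d ζ k
          = ζ ^ (2 ^ k - 1) * a (n - k)
            - ∑ l ∈ Finset.range k,
                ζ ^ (2 ^ k - (k - l + 1) * 2 ^ l)
                  * (ζ ^ ((n - l) * 2 ^ l + 2 ^ l - 1) * d ζ l) := by
      intro ζ hζ
      have h1 := hd ζ hζ (n - k) (Nat.sub_le n k)
      rw [Nat.sub_sub_self hk, Finset.sum_range_succ] at h1
      have h2 : ζ ^ ((n - k) * 2 ^ k) * d ζ k
          = a (n - k) - ∑ l ∈ Finset.range k, ζ ^ ((n - k) * 2 ^ l) * d ζ l := by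
        linear_combination h1
      have e1 : (n - k) * 2 ^ k + 2 ^ k - 1 = (2 ^ k - 1) + (n - k) * 2 ^ k := by
        have := Nat.one_le_two_pow (n := k); omega
      rw [e1, pow_add, mul_assoc, h2, mul_sub, Finset.mul_sum]
      congr 1
      refine Finset.sum_congr rfl fun l hl => ?_
      have hlk := Finset.mem_range.mp hl
      rw [← mul_assoc, ← pow_add, ← mul_assoc, ← pow_add, aux_exp n k l hlk hk]
    have heq : (fun ζ : ℂ => ζ ^ ((n - k) * 2 ^ k + 2 ^ k - 1) * d ζ k)
        =ᶠ[𝓝[≠] (0 : ℂ)]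
        (fun ζ : ℂ => ζ ^ (2 ^ k - 1) * a (n - k)
          - ∑ l ∈ Finset.range k,
              ζ ^ (2 ^ k - (k - l + 1) * 2 ^ l)
                * (ζ ^ ((n - l) * 2 ^ l + 2 ^ l - 1) * d ζ l)) :=
      eventually_mem_nhdsWithin.mono fun ζ hζ => hkey ζ hζ
    refine Filter.Tendsto.congr' heq.symm ?_
    -- limit of each summand
    have hterm : ∀ l ∈ Finset.range k,
        Filter.Tendsto (fun ζ : ℂ => ζ ^ (2 ^ k - (k - l + 1) * 2 ^ l)
            * (ζ ^ ((n - l) * 2 ^ l + 2 ^ l - 1) * d ζ l))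
          (𝓝[≠] (0 : ℂ))
          (𝓝 (if l + 1 = k then (-1) ^ l * a n else 0)) := by
      intro l hl
      have hlk := Finset.mem_range.mp hl
      have hIH := IH l hlk (by omega)
      by_cases hcase : l + 1 = k
      · have hc0 : 2 ^ k - (k - l + 1) * 2 ^ l = 0 := by
          have : k - l + 1 = 2 := by omega
          rw [this]
          have : 2 * 2 ^ l = 2 ^ k := by
            rw [← hcase, pow_succ]; ring
          omega
        simp only [hcase, if_pos rfl, hc0, pow_zero, one_mul]
        exact hIH
      · have hcpos : 0 < 2 ^ k - (k - l + 1) * 2 ^ l := by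
          have := aux_lt k l (by omega)
          omega
        rw [if_neg hcase]
        have := (hzero _ hcpos).mul hIH
        simpa using this
    have hsumT : Filter.Tendsto (fun ζ : ℂ => ∑ l ∈ Finset.range k,
        ζ ^ (2 ^ k - (k - l + 1) * 2 ^ l) * (ζ ^ ((n - l) * 2 ^ l + 2 ^ l - 1) * d ζ l))
        (𝓝[≠] (0 : ℂ))
        (𝓝 (∑ l ∈ Finset.range k, if l + 1 = k then (-1) ^ l * a n else 0)) :=
      tendsto_finset_sum _ hterm
    -- limit of the first term
    rcases Nat.eq_zero_or_pos k with hk0 | hkpos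
    · subst hk0
      simp only [Finset.range_zero, Finset.sum_empty, Nat.sub_zero, pow_zero, pow_one,
        one_mul] at hsumT ⊢
      have : Filter.Tendsto (fun ζ : ℂ => ζ ^ (1 - 1) * a (n - 0)) (𝓝[≠] (0 : ℂ))
          (𝓝 (a n)) := by
        simp only [Nat.sub_self, pow_zero, one_mul, Nat.sub_zero]
        exact tendsto_const_nhds
      simpa using this.sub hsumT
    · have hfirst : Filter.Tendsto (fun ζ : ℂ => ζ ^ (2 ^ k - 1) * a (n - k))
          (𝓝[≠] (0 : ℂ)) (𝓝 0) := by
        have hp : 0 < 2 ^ k - 1 := by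
          have : 2 ≤ 2 ^ k := by
            calc 2 = 2 ^ 1 := (pow_one 2).symm
            _ ≤ 2 ^ k := Nat.pow_le_pow_right (by norm_num) hkpos
          omega
        simpa using (hzero _ hp).mul_const (a (n - k))
      have hsumval : (∑ l ∈ Finset.range k, if l + 1 = k then (-1 : ℂ) ^ l * a n else 0)
          = (-1) ^ (k - 1) * a n := by
        rw [Finset.sum_eq_single (k - 1)]
        · rw [if_pos (by omega)]
        · intro b _ hbne
          rw [if_neg (by omega)]
        · intro hmem
          exact absurd (Finset.mem_range.mpr (by omega)) hmem
      rw [hsumval] at hsumT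
      have hlim : (0 : ℂ) - (-1) ^ (k - 1) * a n = (-1) ^ k * a n := by
        have hkk : k - 1 + 1 = k := by omega
        have hpow : ((-1 : ℂ)) ^ k = -(-1) ^ (k - 1) := by
          conv_lhs => rw [← hkk]
          rw [pow_succ]; ring
        rw [hpow]; ring
      rw [← hlim]
      exact hfirst.sub hsumT
end

section
/- Let B be a symmetric bilinear form on g, let a_0,…,a_n be complex numbers with a_n ≠ 0, and for ζ ≠ 0 let d_0(ζ),…,d_n(ζ) be the unique solution of the system Σ_{l=0}^{n−k} ζ^{k·2^l} d_l(ζ) = a_k, k = 0,…,n. Define the modified inner product on g^n = ⊕_{l=0}^n g by ⟨X,Y⟩^n(ζ) = Σ_{l=0}^n d_l(ζ) B(X_l, Y_l). Then for all indices p, q and all j, k with 0 ≤ j,k ≤ n: lim_{ζ→0} ⟨Y^(j)_p(ζ), Y^(k)_q(ζ)⟩^n(ζ) = a_{j+k} B(X_p, X_q) if j+k ≤ n, and = 0 if j+k > n. -/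
open scoped BigOperators Topology

/-- If `ζ^c * f ζ → 0` along `𝓝[≠] 0` and `c ≤ E`, then `ζ^E * f ζ → 0`. -/
lemma aux_pow_mul_tendsto {f : ℂ → ℂ} {c E : ℕ} (hcE : c ≤ E)
    (hf : Filter.Tendsto (fun ζ => ζ ^ c * f ζ) (𝓝[≠] (0:ℂ)) (𝓝 0)) :
    Filter.Tendsto (fun ζ => ζ ^ E * f ζ) (𝓝[≠] (0:ℂ)) (𝓝 0) := by
  have h1 : Filter.Tendsto (fun ζ : ℂ => ζ ^ (E - c)) (𝓝[≠] (0:ℂ))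
      (𝓝 ((0:ℂ) ^ (E - c))) :=
    ((continuous_pow (E - c)).tendsto 0).mono_left nhdsWithin_le_nhds
  have h2 := h1.mul hf
  rw [mul_zero] at h2
  refine h2.congr fun ζ => ?_
  rw [← mul_assoc, ← pow_add, Nat.sub_add_cancel hcE]

/-- Growth estimate for the solutions `d ζ l` of the triangular system. -/
lemma aux_d_estimate (n : ℕ) (a : ℕ → ℂ) (d : ℂ → ℕ → ℂ)
    (hd : ∀ ζ : ℂ, ζ ≠ 0 → ∀ k : ℕ, k ≤ n →
      ∑ l ∈ Finset.range (n - k + 1), ζ ^ (k * 2 ^ l) * d ζ l = a k) :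
    ∀ l, l ≤ n → Filter.Tendsto (fun ζ : ℂ => ζ ^ (2 ^ l * (n - l + 1)) * d ζ l)
      (𝓝[≠] (0:ℂ)) (𝓝 0) := by
  intro l
  induction l using Nat.strong_induction_on with
  | _ l ih =>
    intro hl
    have key : ∀ ζ : ℂ, ζ ≠ 0 → ζ ^ (2 ^ l * (n - l + 1)) * d ζ l =
        ζ ^ (2 ^ l) * a (n - l)
          - ∑ s ∈ Finset.range l, ζ ^ (2 ^ l + (n - l) * 2 ^ s) * d ζ s := by
      intro ζ hζ
      have h := hd ζ hζ (n - l) (Nat.sub_le n l)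
      rw [Nat.sub_sub_self hl, Finset.sum_range_succ] at h
      have hlast : ζ ^ ((n - l) * 2 ^ l) * d ζ l =
          a (n - l) - ∑ s ∈ Finset.range l, ζ ^ ((n - l) * 2 ^ s) * d ζ s := by
        linear_combination h
      have hexp : 2 ^ l * (n - l + 1) = 2 ^ l + (n - l) * 2 ^ l := by ring
      rw [hexp, pow_add, mul_assoc, hlast, mul_sub, Finset.mul_sum]
      congr 1
      refine Finset.sum_congr rfl fun s _ => ?_
      rw [← mul_assoc, ← pow_add]
    have h0 : Filter.Tendsto (fun ζ : ℂ => ζ ^ (2 ^ l) * a (n - l)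
          - ∑ s ∈ Finset.range l, ζ ^ (2 ^ l + (n - l) * 2 ^ s) * d ζ s)
        (𝓝[≠] (0:ℂ)) (𝓝 0) := by
      have ha : Filter.Tendsto (fun ζ : ℂ => ζ ^ (2 ^ l) * a (n - l)) (𝓝[≠] (0:ℂ)) (𝓝 0) := by
        have := (((continuous_pow (2 ^ l)).tendsto 0).mono_left
          (nhdsWithin_le_nhds : 𝓝[≠] (0:ℂ) ≤ 𝓝 0)).mul_const (a (n - l))
        simpa [zero_pow (by positivity : (2:ℕ) ^ l ≠ 0)] using this
      have hsum : Filter.Tendsto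
          (fun ζ : ℂ => ∑ s ∈ Finset.range l, ζ ^ (2 ^ l + (n - l) * 2 ^ s) * d ζ s)
          (𝓝[≠] (0:ℂ)) (𝓝 0) := by
        have := tendsto_finset_sum (Finset.range l)
          (fun s hs => ?_ : ∀ s ∈ Finset.range l,
            Filter.Tendsto (fun ζ : ℂ => ζ ^ (2 ^ l + (n - l) * 2 ^ s) * d ζ s)
              (𝓝[≠] (0:ℂ)) (𝓝 0))
        · simpa using this
        · have hs' : s < l := Finset.mem_range.mp hs
          refine aux_pow_mul_tendsto ?_ (ih s hs' (le_trans hs'.le hl))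
          -- 2^s * (n - s + 1) ≤ 2^l + (n-l) * 2^s
          have h1 : n - s + 1 = (n - l) + (l - s + 1) := by omega
          have h2 : 2 ^ s * (l - s + 1) ≤ 2 ^ l := by
            calc 2 ^ s * (l - s + 1) ≤ 2 ^ s * 2 ^ (l - s) :=
              Nat.mul_le_mul_left _ (by
                have := Nat.lt_two_pow_self (n := l - s); omega)
            _ = 2 ^ l := by rw [← pow_add]; congr 1; omega
          calc 2 ^ s * (n - s + 1) = 2 ^ s * (l - s + 1) + (n - l) * 2 ^ s := by
                rw [h1]; ring
          _ ≤ 2 ^ l + (n - l) * 2 ^ s := by omega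
      simpa using ha.sub hsum
    exact h0.congr' (by
      filter_upwards [self_mem_nhdsWithin] with ζ hζ
      exact (key ζ hζ).symm)

/-- Let `d_0(ζ),…,d_n(ζ)` solve `∑_{l=0}^{n-k} ζ^{k·2^l} d_l(ζ) = a_k` (`k = 0,…,n`) with
`a_n ≠ 0`, and define the modified inner product
`⟨X,Y⟩^n(ζ) = ∑_{l=0}^n d_l(ζ) B(X_l, Y_l)` on `g^n`. Then
`lim_{ζ→0} ⟨Y^{(j)}_p(ζ), Y^{(k)}_q(ζ)⟩^n(ζ) = a_{j+k} B(X_p, X_q)` if `j + k ≤ n`,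
and `= 0` if `j + k > n`. -/
theorem stmt8 {g : Type*} [AddCommGroup g] [Module ℂ g] {r : ℕ}
    (n : ℕ) (b : Module.Basis (Fin r) ℂ g) (B : g →ₗ[ℂ] g →ₗ[ℂ] ℂ)
    (hBsymm : ∀ x y : g, B x y = B y x)
    (a : ℕ → ℂ) (han : a n ≠ 0)
    (d : ℂ → ℕ → ℂ)
    (hd : ∀ ζ : ℂ, ζ ≠ 0 → ∀ k : ℕ, k ≤ n →
      ∑ l ∈ Finset.range (n - k + 1), ζ ^ (k * 2 ^ l) * d ζ l = a k)
    (p q : Fin r) (j k : ℕ) (hj : j ≤ n) (hk : k ≤ n) :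
    Filter.Tendsto
      (fun ζ : ℂ =>
        ∑ l : Fin (n + 1), d ζ (l : ℕ) * B (Yzeta n b ζ j p l) (Yzeta n b ζ k q l))
      (𝓝[≠] (0 : ℂ))
      (𝓝 (if j + k ≤ n then a (j + k) * B (b p) (b q) else 0)) := by
  -- per-term computation
  have hterm : ∀ ζ : ℂ, ∀ l : Fin (n+1),
      d ζ (l : ℕ) * B (Yzeta n b ζ j p l) (Yzeta n b ζ k q l) =
      (if (l:ℕ) ≤ (n - max j k) then ζ ^ ((j+k) * 2 ^ (l:ℕ)) * d ζ (l:ℕ) else 0) * B (b p) (b q) := by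
    intro ζ l
    simp only [Yzeta]
    by_cases h1 : (l:ℕ) ≤ n - j <;> by_cases h2 : (l:ℕ) ≤ n - k
    · have hM' : (l:ℕ) ≤ (n - max j k) := by omega
      simp only [h1, h2, hM', if_true, map_smul, LinearMap.smul_apply, smul_eq_mul]
      rw [add_mul, pow_add]; ring
    · have hM' : ¬ (l:ℕ) ≤ (n - max j k) := by omega
      simp [h1, h2, hM']
    · have hM' : ¬ (l:ℕ) ≤ (n - max j k) := by omega
      simp [h1, h2, hM']
    · have hM' : ¬ (l:ℕ) ≤ (n - max j k) := by omega
      simp [h1, h2, hM']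
  have hF : ∀ ζ : ℂ,
      (∑ l : Fin (n + 1), d ζ (l : ℕ) * B (Yzeta n b ζ j p l) (Yzeta n b ζ k q l)) =
      (∑ l ∈ Finset.range ((n - max j k) + 1), ζ ^ ((j+k) * 2 ^ l) * d ζ l) * B (b p) (b q) := by
    intro ζ
    rw [Finset.sum_congr rfl (fun l _ => hterm ζ l), ← Finset.sum_mul]
    congr 1
    rw [Fin.sum_univ_eq_sum_range (fun l => if l ≤ (n - max j k) then ζ ^ ((j+k) * 2 ^ l) * d ζ l else 0)]
    rw [← Finset.sum_subset (Finset.range_subset_range.mpr (by omega : (n - max j k) + 1 ≤ n + 1))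
      (fun x _ hx => by
        simp only [Finset.mem_range, not_lt] at hx
        rw [if_neg (by omega)])]
    exact Finset.sum_congr rfl fun x hx => by
      rw [if_pos (Nat.lt_succ_iff.mp (Finset.mem_range.mp hx))]
  rcases le_or_gt (j + k) n with hm | hm
  · rw [if_pos hm]
    have hMle : n - (j + k) + 1 ≤ (n - max j k) + 1 := by omega
    have htail : Filter.Tendsto
        (fun ζ : ℂ => ∑ l ∈ Finset.Ico (n - (j+k) + 1) ((n - max j k) + 1), ζ ^ ((j+k) * 2 ^ l) * d ζ l)
        (𝓝[≠] (0:ℂ)) (𝓝 0) := by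
      have := tendsto_finset_sum (Finset.Ico (n - (j+k) + 1) ((n - max j k) + 1))
        (fun l hl => ?_ : ∀ l ∈ Finset.Ico (n - (j+k) + 1) ((n - max j k) + 1),
          Filter.Tendsto (fun ζ : ℂ => ζ ^ ((j+k) * 2 ^ l) * d ζ l) (𝓝[≠] (0:ℂ)) (𝓝 0))
      · simpa using this
      · obtain ⟨hl1, hl2⟩ := Finset.mem_Ico.mp hl
        have hln : l ≤ n := by omega
        refine aux_pow_mul_tendsto ?_ (aux_d_estimate n a d hd l hln)
        calc 2 ^ l * (n - l + 1) ≤ 2 ^ l * (j + k) :=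
              Nat.mul_le_mul le_rfl (by omega)
          _ = (j + k) * 2 ^ l := mul_comm _ _
    have hmain : Filter.Tendsto
        (fun ζ : ℂ => (a (j+k) + ∑ l ∈ Finset.Ico (n - (j+k) + 1) ((n - max j k) + 1),
            ζ ^ ((j+k) * 2 ^ l) * d ζ l) * B (b p) (b q))
        (𝓝[≠] (0:ℂ)) (𝓝 (a (j+k) * B (b p) (b q))) := by
      have := ((tendsto_const_nhds (x := a (j+k)) (f := 𝓝[≠] (0:ℂ))).add htail).mul_const (B (b p) (b q))
      simpa using this
    refine hmain.congr' ?_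
    filter_upwards [self_mem_nhdsWithin] with ζ hζ
    rw [hF ζ]
    congr 1
    rw [Finset.range_eq_Ico,
      ← Finset.sum_Ico_consecutive _ (Nat.zero_le _) hMle,
      ← Finset.range_eq_Ico, hd ζ hζ (j+k) hm]
  · rw [if_neg (not_le.mpr hm)]
    have hsum : Filter.Tendsto
        (fun ζ : ℂ => ∑ l ∈ Finset.range ((n - max j k) + 1), ζ ^ ((j+k) * 2 ^ l) * d ζ l)
        (𝓝[≠] (0:ℂ)) (𝓝 0) := by
      have := tendsto_finset_sum (Finset.range ((n - max j k) + 1))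
        (fun l hl => ?_ : ∀ l ∈ Finset.range ((n - max j k) + 1),
          Filter.Tendsto (fun ζ : ℂ => ζ ^ ((j+k) * 2 ^ l) * d ζ l) (𝓝[≠] (0:ℂ)) (𝓝 0))
      · simpa using this
      · have hln : l ≤ n := by
          have := Finset.mem_range.mp hl; omega
        refine aux_pow_mul_tendsto ?_ (aux_d_estimate n a d hd l hln)
        calc 2 ^ l * (n - l + 1) ≤ 2 ^ l * (j + k) :=
              Nat.mul_le_mul le_rfl (by omega)
          _ = (j + k) * 2 ^ l := mul_comm _ _
    have := hsum.mul_const (B (b p) (b q))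
    rw [zero_mul] at this
    exact this.congr fun ζ => (hF ζ).symm
end

section
/- In CL ⊗ ℂ[λ]/(λ^{n+1}), define Ψ(E^k_{ij}) = (1/(k+1)) Σ_{l=0}^k ψ^(k−l)_i ψ*^(l)_j for i, j ∈ ℤ and 0 ≤ k ≤ n. Then these elements realize the polynomial Lie algebra gl^(n)_∞: for all i, j, l, m ∈ ℤ and 0 ≤ k, s ≤ n, [Ψ(E^k_{ij}), Ψ(E^s_{lm})] = δ_{jl} Ψ(E^{k+s}_{im}) − δ_{im} Ψ(E^{k+s}_{lj}) if k+s ≤ n, and [Ψ(E^k_{ij}), Ψ(E^s_{lm})] = 0 if k+s > n. -/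
open scoped BigOperators TensorProduct

/-- The ideal `(λ^{n+1})` of `ℂ[λ]`. -/
noncomputable def truncIdeal (n : ℕ) : Ideal (Polynomial ℂ) :=
  Ideal.span {Polynomial.X ^ (n + 1)}

/-- In `CL ⊗ ℂ[λ]/(λ^{n+1})`, the element `ψ^{(s)}_i = ψ_i ⊗ λ^s` associated to a family
`ψ : ℤ → CL`. -/
noncomputable def psiT (n : ℕ) {A : Type*} [Ring A] [Algebra ℂ A] (ψ : ℤ → A)
    (i : ℤ) (s : ℕ) : A ⊗[ℂ] (Polynomial ℂ ⧸ truncIdeal n) :=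
  ψ i ⊗ₜ[ℂ] Ideal.Quotient.mk (truncIdeal n) (Polynomial.X ^ s)

/-- `Ψ(E^k_{ij}) = (1/(k+1)) ∑_{l=0}^k ψ^{(k−l)}_i ψ*^{(l)}_j` in `CL ⊗ ℂ[λ]/(λ^{n+1})`. -/
noncomputable def PsiE (n : ℕ) {A : Type*} [Ring A] [Algebra ℂ A] (ψ ψs : ℤ → A)
    (i j : ℤ) (k : ℕ) : A ⊗[ℂ] (Polynomial ℂ ⧸ truncIdeal n) :=
  ((k : ℂ) + 1)⁻¹ • ∑ l ∈ Finset.range (k + 1), psiT n ψ i (k - l) * psiT n ψs j l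

lemma PsiE_eq (n : ℕ) {A : Type*} [Ring A] [Algebra ℂ A] (ψ ψs : ℤ → A)
    (i j : ℤ) (k : ℕ) :
    PsiE n ψ ψs i j k =
      (ψ i * ψs j) ⊗ₜ[ℂ] Ideal.Quotient.mk (truncIdeal n) (Polynomial.X ^ k) := by
  unfold PsiE psiT
  have hcongr : ∀ l ∈ Finset.range (k + 1),
      (ψ i ⊗ₜ[ℂ] Ideal.Quotient.mk (truncIdeal n) (Polynomial.X ^ (k - l))) *
        (ψs j ⊗ₜ[ℂ] Ideal.Quotient.mk (truncIdeal n) (Polynomial.X ^ l)) =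
      (ψ i * ψs j) ⊗ₜ[ℂ] Ideal.Quotient.mk (truncIdeal n) (Polynomial.X ^ k) := by
    intro l hl
    rw [Finset.mem_range_succ_iff] at hl
    rw [Algebra.TensorProduct.tmul_mul_tmul, ← map_mul, ← pow_add,
      Nat.sub_add_cancel hl]
  rw [Finset.sum_congr rfl hcongr, Finset.sum_const, Finset.card_range,
    ← Nat.cast_smul_eq_nsmul ℂ, smul_smul, Nat.cast_add, Nat.cast_one,
    inv_mul_cancel₀ (Nat.cast_add_one_ne_zero k), one_smul]

lemma comm_key {A : Type*} [Ring A] (a b c d t u : A)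
    (hbc : b * c = t - c * b) (hda : d * a = u - a * d)
    (hac : a * c = -(c * a)) (hbd : b * d = -(d * b))
    (hta : a * t = t * a) (huc : c * u = u * c) :
    a * b * (c * d) - c * d * (a * b) = t * (a * d) - u * (c * b) := by
  have e1 : a * b * (c * d) = t * (a * d) - c * (a * d) * b := by
    calc a * b * (c * d) = a * (b * c) * d := by noncomm_ring
    _ = a * (t - c * b) * d := by rw [hbc]
    _ = a * t * d - (a * c) * (b * d) := by noncomm_ring
    _ = a * t * d - (-(c * a)) * (-(d * b)) := by rw [hac, hbd]
    _ = t * (a * d) - c * (a * d) * b := by rw [hta]; noncomm_ring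
  have e2 : c * d * (a * b) = u * (c * b) - c * (a * d) * b := by
    calc c * d * (a * b) = c * (d * a) * b := by noncomm_ring
    _ = c * (u - a * d) * b := by rw [hda]
    _ = (c * u) * b - c * (a * d) * b := by noncomm_ring
    _ = u * (c * b) - c * (a * d) * b := by rw [huc]; noncomm_ring
  rw [e1, e2]; noncomm_ring

/-- The elements `Ψ(E^k_{ij}) = (1/(k+1)) ∑_{l=0}^k ψ^{(k−l)}_i ψ*^{(l)}_j` of
`CL ⊗ ℂ[λ]/(λ^{n+1})` realize the polynomial Lie algebra `gl^{(n)}_∞`: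
`[Ψ(E^k_{ij}), Ψ(E^s_{lm})] = δ_{jl} Ψ(E^{k+s}_{im}) − δ_{im} Ψ(E^{k+s}_{lj})` when
`k + s ≤ n`, and `[Ψ(E^k_{ij}), Ψ(E^s_{lm})] = 0` when `k + s > n`. -/
theorem stmt16 (n : ℕ) {A : Type*} [Ring A] [Algebra ℂ A]
    (ψ ψs : ℤ → A)
    (h1 : ∀ i j : ℤ, ψ i * ψ j + ψ j * ψ i = 0)
    (h2 : ∀ i j : ℤ, ψs i * ψs j + ψs j * ψs i = 0)
    (h3 : ∀ i j : ℤ, ψ i * ψs j + ψs j * ψ i = if i = j then 1 else 0) :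
    ∀ (i j l m : ℤ) (k s : ℕ), k ≤ n → s ≤ n →
      PsiE n ψ ψs i j k * PsiE n ψ ψs l m s - PsiE n ψ ψs l m s * PsiE n ψ ψs i j k =
        if k + s ≤ n then
          (if j = l then PsiE n ψ ψs i m (k + s) else 0) -
            (if i = m then PsiE n ψ ψs l j (k + s) else 0)
        else 0 := by
  intro i j l m k s _ _
  have key : ψ i * ψs j * (ψ l * ψs m) - ψ l * ψs m * (ψ i * ψs j) =
      (if j = l then (1 : A) else 0) * (ψ i * ψs m) -
        (if i = m then (1 : A) else 0) * (ψ l * ψs j) := by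
    apply comm_key
    · have h' := eq_sub_of_add_eq' (h3 l j)
      rw [h']
      simp [eq_comm]
    · exact eq_sub_of_add_eq' (h3 i m)
    · exact eq_neg_of_add_eq_zero_left (h1 i l)
    · exact eq_neg_of_add_eq_zero_left (h2 j m)
    · split_ifs <;> simp
    · split_ifs <;> simp
  rw [PsiE_eq, PsiE_eq]
  rw [Algebra.TensorProduct.tmul_mul_tmul, Algebra.TensorProduct.tmul_mul_tmul,
    ← map_mul, ← map_mul, ← pow_add, ← pow_add, Nat.add_comm s k,
    ← TensorProduct.sub_tmul, key]
  by_cases hn : k + s ≤ n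
  · rw [if_pos hn]
    rw [TensorProduct.sub_tmul]
    split_ifs <;> simp [PsiE_eq, TensorProduct.zero_tmul]
  · rw [if_neg hn]
    have hz : Ideal.Quotient.mk (truncIdeal n) (Polynomial.X ^ (k + s)) = 0 := by
      rw [Ideal.Quotient.eq_zero_iff_mem, truncIdeal, Ideal.mem_span_singleton]
      exact pow_dvd_pow _ (by omega)
    rw [hz, TensorProduct.tmul_zero]
end
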